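/- Suppose x^sym_ij lies on the segment boundary such that the direction condition r^sym_ij = −t r_ij holds with t > 0, where r_ij = x_j − x_i. If u_h restricted to the macroelement Ω_i is linear and the jump and mean are defined as ⟦∇u⟧_{ij} = (u_j−u_i)/|r_ij| + (u^sym_ij−u_i)/|r^sym_ij| and {|∇u·r̂|}_{ij} = ½(|u_j−u_i|/|r_ij| + |u^sym_ij−u_i|/|r^sym_ij|), then ⟦∇u⟧_{ij} = 0 while {|∇u·r̂|}_{ij} = |∇u·r̂_ij|; hence the detector α_i = (|Σ_j ⟦∇u⟧_{ij}| / Σ_j 2{|∇u·r̂|}_{ij})^q is 0 whenever some directional derivative is nonzero. -/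

import Mathlib

theorem linearity_preservation {d : ℕ} {J : Type*} [Fintype J]
    (a : EuclideanSpace ℝ (Fin d)) (c : ℝ)
    (u : EuclideanSpace ℝ (Fin d) → ℝ) (hu : ∀ x, u x = inner ℝ a x + c)
    (xi : EuclideanSpace ℝ (Fin d)) (xj xsym : J → EuclideanSpace ℝ (Fin d))
    (t : J → ℝ) (ht : ∀ j, 0 < t j) (hne : ∀ j, xj j ≠ xi)
    (hsym : ∀ j, xsym j - xi = -(t j) • (xj j - xi))
    (q : ℝ) (hq : 1 ≤ q) :
    (∀ j, (u (xj j) - u xi) / ‖xj j - xi‖ + (u (xsym j) - u xi) / ‖xsym j - xi‖ = 0) ∧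
    (∀ j, (1 / 2) * (|u (xj j) - u xi| / ‖xj j - xi‖ + |u (xsym j) - u xi| / ‖xsym j - xi‖)
        = |(inner ℝ a ((‖xj j - xi‖)⁻¹ • (xj j - xi)) : ℝ)|) ∧
    ((∃ j, (inner ℝ a (xj j - xi) : ℝ) ≠ 0) →
      (|∑ j, ((u (xj j) - u xi) / ‖xj j - xi‖ + (u (xsym j) - u xi) / ‖xsym j - xi‖)| /
        ∑ j, 2 * ((1 / 2) * (|u (xj j) - u xi| / ‖xj j - xi‖ +
          |u (xsym j) - u xi| / ‖xsym j - xi‖))) ^ q = 0) := by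
  have hdiff : ∀ x y : EuclideanSpace ℝ (Fin d), u x - u y = inner ℝ a (x - y) := by
    intro x y
    rw [hu, hu, inner_sub_right]
    ring
  have hrpos : ∀ j, (0:ℝ) < ‖xj j - xi‖ := fun j =>
    norm_pos_iff.mpr (sub_ne_zero.mpr (hne j))
  have hsn : ∀ j, ‖xsym j - xi‖ = t j * ‖xj j - xi‖ := by
    intro j
    rw [hsym j, norm_smul]
    simp [abs_of_pos (ht j)]
  have hsd : ∀ j, u (xsym j) - u xi = -(t j) * (u (xj j) - u xi) := by
    intro j
    rw [hdiff, hdiff, hsym j, inner_smul_right]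
  have h1 : ∀ j, (u (xj j) - u xi) / ‖xj j - xi‖ +
      (u (xsym j) - u xi) / ‖xsym j - xi‖ = 0 := by
    intro j
    rw [hsd j, hsn j, neg_mul, neg_div, mul_div_mul_left _ _ (ne_of_gt (ht j))]
    ring
  have h2 : ∀ j, (1 / 2) * (|u (xj j) - u xi| / ‖xj j - xi‖ +
      |u (xsym j) - u xi| / ‖xsym j - xi‖)
      = |(inner ℝ a ((‖xj j - xi‖)⁻¹ • (xj j - xi)) : ℝ)| := by
    intro j
    have ht' := ht j
    rw [hsd j, hsn j, inner_smul_right, hdiff]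
    rw [abs_mul, abs_mul, abs_neg, abs_of_pos ht', abs_inv, abs_norm]
    have : t j * |inner ℝ a (xj j - xi)| / (t j * ‖xj j - xi‖)
        = |(inner ℝ a (xj j - xi) : ℝ)| / ‖xj j - xi‖ := by
      rw [mul_div_mul_left _ _ (ne_of_gt ht')]
    rw [this]
    ring
  refine ⟨h1, h2, fun _ => ?_⟩
  have : ∑ j, ((u (xj j) - u xi) / ‖xj j - xi‖ +
      (u (xsym j) - u xi) / ‖xsym j - xi‖) = 0 :=
    Finset.sum_eq_zero fun j _ => h1 j
  rw [this, abs_zero, zero_div]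
  exact Real.zero_rpow (by linarith)
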